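/- For every odd integer n ≥ 1 there exists a globally simple tight relative non-zero sum Heffter array NH_{2n²}(n;n): an n×n matrix A = (a_{i,j}) with entries in Z_{4n²} such that the multiset formed by all a_{i,j} and −a_{i,j} contains every element of Z_{4n²} ∖ J exactly once, where J = 2·Z_{4n²} (the even residues, the subgroup of order 2n²), and for every row i the partial sums a_{i,1} + ⋯ + a_{i,k} (1 ≤ k ≤ n) are nonzero and pairwise distinct in Z_{4n²}, and for every column j the partial sums a_{1,j} + ⋯ + a_{k,j} (1 ≤ k ≤ n) are nonzero and pairwise distinct in Z_{4n²}. -/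
import Mathlib

namespace Stmt6P


def ent (n i j : ℕ) : ℤ := (-1)^(i+j) * (2*((n:ℤ)*((i:ℤ)-1)) + 2*(j:ℤ) - 1)

lemma zmod_zero {N : ℕ} {a : ℤ} (h : (a : ZMod N) = 0) (hb : a.natAbs < N) : a = 0 := by
  rw [ZMod.intCast_zmod_eq_zero_iff_dvd] at h
  have h2 : N ∣ a.natAbs := by
    have := Int.natAbs_dvd_natAbs.mpr h
    simpa using this
  rcases Nat.eq_zero_or_pos a.natAbs with h0 | h0
  · omega
  · have := Nat.le_of_dvd h0 h2; omega

lemma zmod_inj {N : ℕ} {a b : ℤ} (h : (a : ZMod N) = (b : ZMod N))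
    (hb : (a - b).natAbs < N) : a = b := by
  have h0 : ((a - b : ℤ) : ZMod N) = 0 := by push_cast; rw [h]; ring
  have := zmod_zero h0 hb
  omega

lemma row_sum (n i k : ℕ) :
    ∑ j ∈ Finset.Icc 1 k, ent n i j =
      if Even k then (-1)^i * (k:ℤ)
      else (-1)^(i+1) * (2*((n:ℤ)*((i:ℤ)-1)) + (k:ℤ)) := by
  induction k with
  | zero => simp
  | succ k ih =>
    rw [Finset.sum_Icc_succ_top (by omega : 1 ≤ k + 1), ih]
    unfold ent
    rcases Nat.even_or_odd k with hk | hk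
    · rw [if_pos hk, if_neg (by simp [Nat.even_add_one, hk])]
      have h1 : (-1:ℤ)^(i+(k+1)) = -(-1)^i := by
        rw [pow_add, (hk.add_one).neg_one_pow]; ring
      have h2 : (-1:ℤ)^(i+1) = -(-1)^i := by rw [pow_succ]; ring
      rw [h1, h2]; push_cast; ring
    · rw [if_neg (by simpa using hk), if_pos (Nat.even_add_one.mpr (by simpa using hk))]
      have h1 : (-1:ℤ)^(i+(k+1)) = (-1)^i := by
        rw [pow_add, (Nat.even_add_one.mpr (by simpa using hk)).neg_one_pow, mul_one]
      have h2 : (-1:ℤ)^(i+1) = -(-1)^i := by rw [pow_succ]; ring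
      rw [h1, h2]; push_cast; ring

lemma col_sum (n j k : ℕ) :
    ∑ i ∈ Finset.Icc 1 k, ent n i j =
      if Even k then (-1)^j * ((n:ℤ)*(k:ℤ))
      else (-1)^(j+1) * ((n:ℤ)*((k:ℤ)-1) + 2*(j:ℤ) - 1) := by
  induction k with
  | zero => simp
  | succ k ih =>
    rw [Finset.sum_Icc_succ_top (by omega : 1 ≤ k + 1), ih]
    unfold ent
    rcases Nat.even_or_odd k with hk | hk
    · rw [if_pos hk, if_neg (by simp [Nat.even_add_one, hk])]
      have h1 : (-1:ℤ)^((k+1)+j) = -(-1)^j := by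
        rw [add_comm, pow_add, (hk.add_one).neg_one_pow]; ring
      have h2 : (-1:ℤ)^(j+1) = -(-1)^j := by rw [pow_succ]; ring
      rw [h1, h2]; push_cast; ring
    · rw [if_neg (by simpa using hk), if_pos (Nat.even_add_one.mpr (by simpa using hk))]
      have h1 : (-1:ℤ)^((k+1)+j) = (-1)^j := by
        rw [add_comm, pow_add, (Nat.even_add_one.mpr (by simpa using hk)).neg_one_pow, mul_one]
      have h2 : (-1:ℤ)^(j+1) = -(-1)^j := by rw [pow_succ]; ring
      rw [h1, h2]; push_cast; ring



lemma key_row (n i k : ℕ) :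
    (∑ j ∈ Finset.Icc 1 k, ((ent n i j : ℤ) : ZMod (4*n^2))) =
      (((if Even k then (-1)^i * (k:ℤ)
        else (-1)^(i+1) * (2*((n:ℤ)*((i:ℤ)-1)) + (k:ℤ))) : ℤ) : ZMod (4*n^2)) := by
  rw [← row_sum n i k, Int.cast_sum]

lemma key_col (n j k : ℕ) :
    (∑ i ∈ Finset.Icc 1 k, ((ent n i j : ℤ) : ZMod (4*n^2))) =
      (((if Even k then (-1)^j * ((n:ℤ)*(k:ℤ))
        else (-1)^(j+1) * ((n:ℤ)*((k:ℤ)-1) + 2*(j:ℤ) - 1)) : ℤ) : ZMod (4*n^2)) := by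
  rw [← col_sum n j k, Int.cast_sum]

lemma rows_nonzero (n : ℕ) (hn : 1 ≤ n) :
    ∀ i ∈ Finset.Icc 1 n, ∀ k ∈ Finset.Icc 1 n,
      (∑ j ∈ Finset.Icc 1 k, ((ent n i j : ℤ) : ZMod (4*n^2))) ≠ 0 := by
  intro i hi k hk h
  rw [Finset.mem_Icc] at hi hk
  rw [key_row] at h
  have hN4 : (4*n^2 : ℕ) = 4*(n*n) := by ring
  have hQn : (n:ℤ) ≤ (n:ℤ)*n := by nlinarith
  have hP0 : 0 ≤ (n:ℤ)*((i:ℤ)-1) := mul_nonneg (by positivity) (by omega)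
  have hP1 : (n:ℤ)*((i:ℤ)-1) ≤ (n:ℤ)*(n:ℤ) - n := by
    have hi2 : (i:ℤ) ≤ n := by exact_mod_cast hi.2
    nlinarith
  have hpow : (-1:ℤ)^i = 1 ∨ (-1:ℤ)^i = -1 := neg_one_pow_eq_or ℤ i
  have h2 : (-1:ℤ)^(i+1) = -(-1)^i := by rw [pow_succ]; ring
  rcases Nat.even_or_odd k with hke | hke
  · rw [if_pos hke] at h
    rcases hpow with hp | hp <;> rw [hp] at h <;>
    · have h0 := zmod_zero h (by rw [hN4]; omega)
      omega
  · rw [if_neg (by simpa using hke), h2] at h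
    rcases hpow with hp | hp <;> rw [hp] at h <;>
    · have h0 := zmod_zero h (by rw [hN4]; omega)
      omega

lemma rows_distinct (n : ℕ) (hn : 1 ≤ n) :
    ∀ i ∈ Finset.Icc 1 n, ∀ k ∈ Finset.Icc 1 n, ∀ k' ∈ Finset.Icc 1 n,
      (∑ j ∈ Finset.Icc 1 k, ((ent n i j : ℤ) : ZMod (4*n^2))) =
      (∑ j ∈ Finset.Icc 1 k', ((ent n i j : ℤ) : ZMod (4*n^2))) → k = k' := by
  intro i hi k hk k' hk' h
  rw [Finset.mem_Icc] at hi hk hk'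
  rw [key_row, key_row] at h
  have hN4 : (4*n^2 : ℕ) = 4*(n*n) := by ring
  have hQn : (n:ℤ) ≤ (n:ℤ)*n := by nlinarith
  have hP0 : 0 ≤ (n:ℤ)*((i:ℤ)-1) := mul_nonneg (by positivity) (by omega)
  have hP1 : (n:ℤ)*((i:ℤ)-1) ≤ (n:ℤ)*(n:ℤ) - n := by
    have hi2 : (i:ℤ) ≤ n := by exact_mod_cast hi.2
    nlinarith
  have hpow : (-1:ℤ)^i = 1 ∨ (-1:ℤ)^i = -1 := neg_one_pow_eq_or ℤ i
  have h2 : (-1:ℤ)^(i+1) = -(-1)^i := by rw [pow_succ]; ring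
  rcases Nat.even_or_odd k with hke | hke <;> rcases Nat.even_or_odd k' with hke' | hke' <;>
    [rw [if_pos hke, if_pos hke'] at h;
     rw [if_pos hke, if_neg (by simpa using hke'), h2] at h;
     rw [if_neg (by simpa using hke), if_pos hke', h2] at h;
     rw [if_neg (by simpa using hke), if_neg (by simpa using hke'), h2] at h] <;>
  rcases hpow with hp | hp <;> rw [hp] at h <;>
  · have h0 := zmod_inj h (by rw [hN4]; omega)
    omega



lemma cols_nonzero (n : ℕ) (hn : 1 ≤ n) :
    ∀ j ∈ Finset.Icc 1 n, ∀ k ∈ Finset.Icc 1 n,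
      (∑ i ∈ Finset.Icc 1 k, ((ent n i j : ℤ) : ZMod (4*n^2))) ≠ 0 := by
  intro j hj k hk h
  rw [Finset.mem_Icc] at hj hk
  rw [key_col] at h
  have hN4 : (4*n^2 : ℕ) = 4*(n*n) := by ring
  have hQn : (n:ℤ) ≤ (n:ℤ)*n := by nlinarith
  have hjn : (j:ℤ) ≤ n := by exact_mod_cast hj.2
  have hkn : (k:ℤ) ≤ n := by exact_mod_cast hk.2
  have hA0 : (n:ℤ) ≤ (n:ℤ)*(k:ℤ) := by nlinarith
  have hA1 : (n:ℤ)*(k:ℤ) ≤ (n:ℤ)*(n:ℤ) := by nlinarith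
  have hB0 : 0 ≤ (n:ℤ)*((k:ℤ)-1) := mul_nonneg (by positivity) (by omega)
  have hB1 : (n:ℤ)*((k:ℤ)-1) ≤ (n:ℤ)*(n:ℤ) - n := by nlinarith
  have hpow : (-1:ℤ)^j = 1 ∨ (-1:ℤ)^j = -1 := neg_one_pow_eq_or ℤ j
  have h2 : (-1:ℤ)^(j+1) = -(-1)^j := by rw [pow_succ]; ring
  rcases Nat.even_or_odd k with hke | hke
  · rw [if_pos hke] at h
    rcases hpow with hp | hp <;> rw [hp] at h <;>
    · have h0 := zmod_zero h (by rw [hN4]; omega)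
      omega
  · rw [if_neg (by simpa using hke), h2] at h
    rcases hpow with hp | hp <;> rw [hp] at h <;>
    · have h0 := zmod_zero h (by rw [hN4]; omega)
      omega

lemma cols_distinct (n : ℕ) (hn : 1 ≤ n) :
    ∀ j ∈ Finset.Icc 1 n, ∀ k ∈ Finset.Icc 1 n, ∀ k' ∈ Finset.Icc 1 n,
      (∑ i ∈ Finset.Icc 1 k, ((ent n i j : ℤ) : ZMod (4*n^2))) =
      (∑ i ∈ Finset.Icc 1 k', ((ent n i j : ℤ) : ZMod (4*n^2))) → k = k' := by
  intro j hj k hk k' hk' h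
  rw [Finset.mem_Icc] at hj hk hk'
  rw [key_col, key_col] at h
  have hN4 : (4*n^2 : ℕ) = 4*(n*n) := by ring
  have hn0 : (n:ℤ) ≠ 0 := by exact_mod_cast (by omega : n ≠ 0)
  have hQn : (n:ℤ) ≤ (n:ℤ)*n := by nlinarith
  have hjn : (j:ℤ) ≤ n := by exact_mod_cast hj.2
  have hkn : (k:ℤ) ≤ n := by exact_mod_cast hk.2
  have hkn' : (k':ℤ) ≤ n := by exact_mod_cast hk'.2
  have hA0 : (n:ℤ) ≤ (n:ℤ)*(k:ℤ) := by nlinarith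
  have hA1 : (n:ℤ)*(k:ℤ) ≤ (n:ℤ)*(n:ℤ) := by nlinarith
  have hA0' : (n:ℤ) ≤ (n:ℤ)*(k':ℤ) := by nlinarith
  have hA1' : (n:ℤ)*(k':ℤ) ≤ (n:ℤ)*(n:ℤ) := by nlinarith
  have hB0 : 0 ≤ (n:ℤ)*((k:ℤ)-1) := mul_nonneg (by positivity) (by omega)
  have hB1 : (n:ℤ)*((k:ℤ)-1) ≤ (n:ℤ)*(n:ℤ) - n := by nlinarith
  have hB0' : 0 ≤ (n:ℤ)*((k':ℤ)-1) := mul_nonneg (by positivity) (by omega)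
  have hB1' : (n:ℤ)*((k':ℤ)-1) ≤ (n:ℤ)*(n:ℤ) - n := by nlinarith
  have hpow : (-1:ℤ)^j = 1 ∨ (-1:ℤ)^j = -1 := neg_one_pow_eq_or ℤ j
  have h2 : (-1:ℤ)^(j+1) = -(-1)^j := by rw [pow_succ]; ring
  rcases Nat.even_or_odd k with hke | hke <;> rcases Nat.even_or_odd k' with hke' | hke' <;>
    [rw [if_pos hke, if_pos hke'] at h;
     rw [if_pos hke, if_neg (by simpa using hke'), h2] at h;
     rw [if_neg (by simpa using hke), if_pos hke', h2] at h;
     rw [if_neg (by simpa using hke), if_neg (by simpa using hke'), h2] at h] <;>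
  rcases hpow with hp | hp <;> rw [hp] at h
  -- even/even : n*k = n*k' → k = k'
  · have h0 := zmod_inj h (by rw [hN4]; omega)
    have h1 : (n:ℤ)*(k:ℤ) = (n:ℤ)*(k':ℤ) := by omega
    have := mul_left_cancel₀ hn0 h1
    exact_mod_cast this
  · have h0 := zmod_inj h (by rw [hN4]; omega)
    have h1 : (n:ℤ)*(k:ℤ) = (n:ℤ)*(k':ℤ) := by omega
    have := mul_left_cancel₀ hn0 h1
    exact_mod_cast this
  -- even/odd : contradiction
  · have h0 := zmod_inj h (by rw [hN4]; omega)
    omega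
  · have h0 := zmod_inj h (by rw [hN4]; omega)
    omega
  -- odd/even
  · have h0 := zmod_inj h (by rw [hN4]; omega)
    omega
  · have h0 := zmod_inj h (by rw [hN4]; omega)
    omega
  -- odd/odd
  · have h0 := zmod_inj h (by rw [hN4]; omega)
    have h1 : (n:ℤ)*((k:ℤ)-1) = (n:ℤ)*((k':ℤ)-1) := by omega
    have := mul_left_cancel₀ hn0 h1
    have : (k:ℤ) = k' := by omega
    exact_mod_cast this
  · have h0 := zmod_inj h (by rw [hN4]; omega)
    have h1 : (n:ℤ)*((k:ℤ)-1) = (n:ℤ)*((k':ℤ)-1) := by omega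
    have := mul_left_cancel₀ hn0 h1
    have : (k:ℤ) = k' := by omega
    exact_mod_cast this




def mv (n : ℕ) (p : ℕ × ℕ) : ℕ := 2*n*(p.1 - 1) + 2*(p.2 - 1) + 1

lemma mem_S {n : ℕ} {p : ℕ × ℕ} :
    p ∈ Finset.Icc 1 n ×ˢ Finset.Icc 1 n ↔ (1 ≤ p.1 ∧ p.1 ≤ n) ∧ (1 ≤ p.2 ∧ p.2 ≤ n) := by
  simp [Finset.mem_product, Finset.mem_Icc]

lemma mv_odd (n : ℕ) (p : ℕ × ℕ) : mv n p % 2 = 1 := by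
  unfold mv
  have he : 2*n*(p.1-1) = 2*(n*(p.1-1)) := by ring
  omega

lemma mv_lt (n : ℕ) {p : ℕ × ℕ} (hp : p ∈ Finset.Icc 1 n ×ˢ Finset.Icc 1 n) :
    mv n p < 2*(n*n) := by
  rw [mem_S] at hp
  obtain ⟨i, j⟩ := p
  obtain ⟨⟨h1, h2⟩, h3, h4⟩ := hp
  obtain ⟨a, rfl⟩ : ∃ a, i = a + 1 := ⟨i - 1, by omega⟩
  obtain ⟨b, rfl⟩ : ∃ b, j = b + 1 := ⟨j - 1, by omega⟩
  unfold mv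
  simp only [Nat.add_sub_cancel]
  have han : a < n := by omega
  have hbn : b < n := by omega
  nlinarith

lemma mv_inj (n : ℕ) {p q : ℕ × ℕ} (hp : p ∈ Finset.Icc 1 n ×ˢ Finset.Icc 1 n)
    (hq : q ∈ Finset.Icc 1 n ×ˢ Finset.Icc 1 n) (h : mv n p = mv n q) : p = q := by
  rw [mem_S] at hp hq
  obtain ⟨⟨h1, h2⟩, h3, h4⟩ := hp
  obtain ⟨⟨g1, g2⟩, g3, g4⟩ := hq
  unfold mv at h
  have hz : 2*((n:ℤ)*((p.1:ℤ)-1)) + 2*((p.2:ℤ)-1) = 2*((n:ℤ)*((q.1:ℤ)-1)) + 2*((q.2:ℤ)-1) := by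
    have := congrArg (fun x : ℕ => (x : ℤ)) h
    push_cast at this
    have c1 : ((p.1 - 1 : ℕ) : ℤ) = (p.1:ℤ) - 1 := by omega
    have c2 : ((p.2 - 1 : ℕ) : ℤ) = (p.2:ℤ) - 1 := by omega
    have c3 : ((q.1 - 1 : ℕ) : ℤ) = (q.1:ℤ) - 1 := by omega
    have c4 : ((q.2 - 1 : ℕ) : ℤ) = (q.2:ℤ) - 1 := by omega
    rw [c1, c2, c3, c4] at this
    linarith
  have hp2 : (p.2:ℤ) ≤ n := by exact_mod_cast h4
  have hq2 : (q.2:ℤ) ≤ n := by exact_mod_cast g4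
  have hp2' : (1:ℤ) ≤ p.2 := by exact_mod_cast h3
  have hq2' : (1:ℤ) ≤ q.2 := by exact_mod_cast g3
  have h11 : p.1 = q.1 := by
    rcases lt_trichotomy p.1 q.1 with hlt | heq | hlt
    · exfalso
      have : (p.1:ℤ) + 1 ≤ q.1 := by exact_mod_cast hlt
      nlinarith
    · exact heq
    · exfalso
      have : (q.1:ℤ) + 1 ≤ p.1 := by exact_mod_cast hlt
      nlinarith
  have h22 : p.2 = q.2 := by
    rw [h11] at hz
    have : (p.2:ℤ) = q.2 := by linarith
    exact_mod_cast this
  exact Prod.ext h11 h22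

lemma mv_surj (n : ℕ) (hn : 1 ≤ n) (u : ℕ) (hu : u % 2 = 1) (hlt : u < 2*(n*n)) :
    ∃ p ∈ Finset.Icc 1 n ×ˢ Finset.Icc 1 n, mv n p = u := by
  have h2n : 0 < 2*n := by omega
  obtain ⟨q, r, hdm, hr⟩ : ∃ q r, 2*(n*q) + r = u ∧ r < 2*n :=
    ⟨u/(2*n), u % (2*n), by linarith [Nat.div_add_mod u (2*n)], Nat.mod_lt _ h2n⟩
  have hrodd : r % 2 = 1 := by omega
  have hqn : q < n := by
    by_contra hc
    push_neg at hc
    have := Nat.mul_le_mul_left n hc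
    omega
  refine ⟨(q+1, r/2 + 1), ?_, ?_⟩
  · rw [mem_S]
    refine ⟨⟨by omega, by omega⟩, by omega, by omega⟩
  · unfold mv
    simp only [Nat.add_sub_cancel]
    have he : 2*n*q = 2*(n*q) := by ring
    rw [he]
    omega



lemma ent_cast (n : ℕ) {p : ℕ × ℕ} (hp : p ∈ Finset.Icc 1 n ×ˢ Finset.Icc 1 n) :
    ent n p.1 p.2 = (-1)^(p.1+p.2) * (mv n p : ℤ) := by
  rw [mem_S] at hp
  obtain ⟨i, j⟩ := p
  obtain ⟨⟨h1, h2⟩, h3, h4⟩ := hp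
  obtain ⟨a, rfl⟩ : ∃ a, i = a + 1 := ⟨i - 1, by omega⟩
  obtain ⟨b, rfl⟩ : ∃ b, j = b + 1 := ⟨j - 1, by omega⟩
  unfold ent mv
  simp only [Nat.add_sub_cancel]
  push_cast
  ring

lemma pair_eq (n : ℕ) {p : ℕ × ℕ} (hp : p ∈ Finset.Icc 1 n ×ˢ Finset.Icc 1 n) :
    ({((ent n p.1 p.2 : ℤ) : ZMod (4*n^2)), -((ent n p.1 p.2 : ℤ) : ZMod (4*n^2))} :
        Multiset (ZMod (4*n^2))) =
    {((mv n p : ℕ) : ZMod (4*n^2)), -((mv n p : ℕ) : ZMod (4*n^2))} := by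
  have hc := ent_cast n hp
  rcases Nat.even_or_odd (p.1 + p.2) with hpar | hpar
  · rw [hc, hpar.neg_one_pow, one_mul]
    push_cast
    rfl
  · rw [hc, hpar.neg_one_pow, neg_one_mul]
    have h2 : (((-(mv n p : ℤ)) : ℤ) : ZMod (4*n^2)) = -((mv n p : ℕ) : ZMod (4*n^2)) := by
      push_cast; ring
    rw [h2, neg_neg, Multiset.pair_comm]

lemma count_formula (n : ℕ) (x : ZMod (4*n^2)) :
    Multiset.count x (((Finset.Icc 1 n ×ˢ Finset.Icc 1 n).val).bind
      (fun p => ({((ent n p.1 p.2 : ℤ) : ZMod (4*n^2)),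
                  -((ent n p.1 p.2 : ℤ) : ZMod (4*n^2))} : Multiset (ZMod (4*n^2)))))
    = ∑ p ∈ Finset.Icc 1 n ×ˢ Finset.Icc 1 n,
        ((if x = ((mv n p : ℕ) : ZMod (4*n^2)) then 1 else 0) +
         (if x = -((mv n p : ℕ) : ZMod (4*n^2)) then 1 else 0)) := by
  rw [Multiset.count_bind, Finset.sum]
  congr 1
  apply Multiset.map_congr rfl
  intro p hp
  rw [pair_eq n (Finset.mem_def.mpr hp)]
  rw [show ({((mv n p : ℕ) : ZMod (4*n^2)), -((mv n p : ℕ) : ZMod (4*n^2))} :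
      Multiset (ZMod (4*n^2))) =
      ((mv n p : ℕ) : ZMod (4*n^2)) ::ₘ {-((mv n p : ℕ) : ZMod (4*n^2))} from rfl]
  rw [Multiset.count_cons, Multiset.count_singleton, add_comm]

lemma count_even (n : ℕ) (hn : 1 ≤ n) (x : ZMod (4*n^2))
    (hx : ∃ y, x = ((2:ℕ) : ZMod (4*n^2)) * y) :
    Multiset.count x (((Finset.Icc 1 n ×ˢ Finset.Icc 1 n).val).bind
      (fun p => ({((ent n p.1 p.2 : ℤ) : ZMod (4*n^2)),
                  -((ent n p.1 p.2 : ℤ) : ZMod (4*n^2))} : Multiset (ZMod (4*n^2))))) = 0 := by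
  rw [count_formula]
  apply Finset.sum_eq_zero
  intro p hp
  obtain ⟨y, hy⟩ := hx
  have hdvd : (2:ℕ) ∣ 4*n^2 := ⟨2*n^2, by ring⟩
  set φ := ZMod.castHom hdvd (ZMod 2) with hφ
  have hφx : φ x = 0 := by
    rw [hy, map_mul, map_natCast]
    have : ((2:ℕ) : ZMod 2) = 0 := by decide
    rw [this, zero_mul]
  have hφm : φ (((mv n p : ℕ)) : ZMod (4*n^2)) = 1 := by
    rw [map_natCast, ← ZMod.natCast_mod (mv n p) 2, mv_odd n p, Nat.cast_one]
  have c1 : x ≠ ((mv n p : ℕ) : ZMod (4*n^2)) := by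
    intro h
    have := congrArg φ h
    rw [hφx, hφm] at this
    exact absurd this (by decide)
  have c2 : x ≠ -((mv n p : ℕ) : ZMod (4*n^2)) := by
    intro h
    have := congrArg φ h
    rw [hφx, map_neg, hφm] at this
    exact absurd this (by decide)
  rw [if_neg c1, if_neg c2, add_zero]

lemma count_odd (n : ℕ) (hn : 1 ≤ n) (x : ZMod (4*n^2))
    (hx : ¬∃ y, x = ((2:ℕ) : ZMod (4*n^2)) * y) :
    Multiset.count x (((Finset.Icc 1 n ×ˢ Finset.Icc 1 n).val).bind
      (fun p => ({((ent n p.1 p.2 : ℤ) : ZMod (4*n^2)),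
                  -((ent n p.1 p.2 : ℤ) : ZMod (4*n^2))} : Multiset (ZMod (4*n^2))))) = 1 := by
  haveI : NeZero (4*n^2) := ⟨by positivity⟩
  rw [count_formula]
  have hN4 : (4*n^2 : ℕ) = 4*(n*n) := by ring
  have hu : x.val < 4*(n*n) := lt_of_lt_of_eq (ZMod.val_lt x) hN4
  have huodd : x.val % 2 = 1 := by
    by_contra hc
    apply hx
    refine ⟨((x.val/2 : ℕ) : ZMod (4*n^2)), ?_⟩
    conv_lhs => rw [← ZMod.natCast_zmod_val x]
    rw [← Nat.cast_mul]
    congr 1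
    omega
  have hvx : ∀ m : ℕ, m < 4*(n*n) → (x = (m : ZMod (4*n^2)) ↔ x.val = m) := by
    intro m hm
    constructor
    · intro h; rw [h, ZMod.val_cast_of_lt (by rw [hN4]; exact hm)]
    · intro h; rw [← h, ZMod.natCast_zmod_val]
  have hneg : ∀ m : ℕ, m ≤ 4*(n*n) →
      -((m : ℕ) : ZMod (4*n^2)) = ((4*(n*n) - m : ℕ) : ZMod (4*n^2)) := by
    intro m hm
    have h0 : (((4*(n*n) - m) + m : ℕ) : ZMod (4*n^2)) = 0 := by
      rw [show (4*(n*n) - m) + m = 4*n^2 by omega]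
      exact ZMod.natCast_self _
    rw [Nat.cast_add] at h0
    exact neg_eq_of_add_eq_zero_left h0
  have key : ∀ p ∈ Finset.Icc 1 n ×ˢ Finset.Icc 1 n,
      (x = ((mv n p : ℕ) : ZMod (4*n^2)) ↔ x.val = mv n p) ∧
      (x = -((mv n p : ℕ) : ZMod (4*n^2)) ↔ x.val = 4*(n*n) - mv n p) := by
    intro p hp
    have hmlt := mv_lt n hp
    have hmodd := mv_odd n p
    refine ⟨hvx _ (by omega), ?_⟩
    rw [hneg _ (by omega)]
    exact hvx _ (by omega)
  rcases Nat.lt_or_ge x.val (2*(n*n)) with hcase | hcase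
  · obtain ⟨p₀, hp₀, hmv₀⟩ := mv_surj n hn x.val huodd hcase
    rw [Finset.sum_eq_single_of_mem p₀ hp₀]
    · rw [if_pos ((key p₀ hp₀).1.mpr hmv₀.symm),
        if_neg (fun h => by have h2 := (key p₀ hp₀).2.mp h; have := mv_lt n hp₀; omega)]
    · intro p hp hne
      have hmlt := mv_lt n hp
      rw [if_neg (fun h => hne (mv_inj n hp hp₀ (by have h1 := (key p hp).1.mp h; omega))),
        if_neg (fun h => by have h2 := (key p hp).2.mp h; omega), add_zero]
  · have hwodd : (4*(n*n) - x.val) % 2 = 1 := by omega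
    have hwlt : 4*(n*n) - x.val < 2*(n*n) := by omega
    obtain ⟨p₀, hp₀, hmv₀⟩ := mv_surj n hn (4*(n*n) - x.val) hwodd hwlt
    rw [Finset.sum_eq_single_of_mem p₀ hp₀]
    · rw [if_neg (fun h => by have h2 := (key p₀ hp₀).1.mp h; omega),
        if_pos ((key p₀ hp₀).2.mpr (by omega))]
    · intro p hp hne
      have hmlt := mv_lt n hp
      rw [if_neg (fun h => by have h2 := (key p hp).1.mp h; omega),
        if_neg (fun h => hne (mv_inj n hp hp₀ (by have h2 := (key p hp).2.mp h; omega))),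
        add_zero]

end Stmt6P

/-- Proposition 3.10: for every odd n ≥ 1 there exists a globally simple tight
relative non-zero sum Heffter array NH_{2n²}(n;n) over Z_{4n²}, where the
subgroup J of order 2n² consists of the multiples of 2. -/
theorem stmt6 (n : ℕ) (hn : 1 ≤ n) (hodd : Odd n) :
    ∃ A : ℕ → ℕ → ZMod (4 * n ^ 2),
      (∀ x : ZMod (4 * n ^ 2),
        (∃ y : ZMod (4 * n ^ 2), x = ((2 : ℕ) : ZMod (4 * n ^ 2)) * y) →
        Multiset.count x
          (((Finset.Icc 1 n ×ˢ Finset.Icc 1 n).val).bind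
            (fun p => ({A p.1 p.2, -A p.1 p.2} : Multiset (ZMod (4 * n ^ 2))))) = 0) ∧
      (∀ x : ZMod (4 * n ^ 2),
        ¬(∃ y : ZMod (4 * n ^ 2), x = ((2 : ℕ) : ZMod (4 * n ^ 2)) * y) →
        Multiset.count x
          (((Finset.Icc 1 n ×ˢ Finset.Icc 1 n).val).bind
            (fun p => ({A p.1 p.2, -A p.1 p.2} : Multiset (ZMod (4 * n ^ 2))))) = 1) ∧
      (∀ i ∈ Finset.Icc 1 n, ∀ k ∈ Finset.Icc 1 n,
        (∑ j ∈ Finset.Icc 1 k, A i j) ≠ 0) ∧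
      (∀ i ∈ Finset.Icc 1 n, ∀ k ∈ Finset.Icc 1 n, ∀ k' ∈ Finset.Icc 1 n,
        (∑ j ∈ Finset.Icc 1 k, A i j) = (∑ j ∈ Finset.Icc 1 k', A i j) → k = k') ∧
      (∀ j ∈ Finset.Icc 1 n, ∀ k ∈ Finset.Icc 1 n,
        (∑ i ∈ Finset.Icc 1 k, A i j) ≠ 0) ∧
      (∀ j ∈ Finset.Icc 1 n, ∀ k ∈ Finset.Icc 1 n, ∀ k' ∈ Finset.Icc 1 n,
        (∑ i ∈ Finset.Icc 1 k, A i j) = (∑ i ∈ Finset.Icc 1 k', A i j) → k = k') := by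
  refine ⟨fun i j => ((Stmt6P.ent n i j : ℤ) : ZMod (4 * n ^ 2)), ?_, ?_, ?_, ?_, ?_, ?_⟩
  · exact fun x hx => Stmt6P.count_even n hn x hx
  · exact fun x hx => Stmt6P.count_odd n hn x hx
  · exact Stmt6P.rows_nonzero n hn
  · exact Stmt6P.rows_distinct n hn
  · exact Stmt6P.cols_nonzero n hn
  · exact Stmt6P.cols_distinct n hn
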